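/- Fix T > 0, σ ∈ ℝ, R > 0, and let α(t) = λ e^{-ρ t} + (1-λ) e^{-γ t} with γ > ρ > 0 and λ ∈ (0,1). Then there exists exactly one continuous function P : Δ[0,T] → ℝ, where Δ[0,T] = {(t,s) : 0 ≤ t ≤ s ≤ T}, such that for each fixed t the map s ↦ P(t,s) is differentiable on [t,T] and satisfies the nonlocal Riccati equation ∂_s P(t,s) + σ² P(t,s) - (2/R) P(t,s) P(s,s) + α(s-t) P(s,s)²/R = 0 for all (t,s) ∈ Δ[0,T], with terminal condition P(t,T) = α(T-t) for all t ∈ [0,T]. -/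

import Mathlib

open Real Set

/-- `P` (with `s`-partial derivative `Ps`) is a continuous solution, on
`Δ[0,T] = {(t,s) : 0 ≤ t ≤ s ≤ T}`, of the nonlocal Riccati equation of the
single-player time-inconsistent problem:
`∂ₛP(t,s) + σ² P(t,s) - (2/R) P(t,s) P(s,s) + α(s-t) P(s,s)²/R = 0`
with terminal condition `P(t,T) = α(T-t)`. -/
def IsSinglePlayerRiccatiSolution (T σ R : ℝ) (α : ℝ → ℝ) (P Ps : ℝ → ℝ → ℝ) : Prop :=
  ContinuousOn (fun p : ℝ × ℝ => P p.1 p.2)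
    {p : ℝ × ℝ | 0 ≤ p.1 ∧ p.1 ≤ p.2 ∧ p.2 ≤ T} ∧
  (∀ t ∈ Set.Icc (0 : ℝ) T, ∀ s ∈ Set.Icc t T,
    HasDerivWithinAt (P t) (Ps t s) (Set.Icc t T) s ∧
    Ps t s + σ ^ 2 * P t s - (2 / R) * P t s * P s s
      + α (s - t) * (P s s) ^ 2 / R = 0) ∧
  (∀ t ∈ Set.Icc (0 : ℝ) T, P t T = α (T - t))


lemma contOn_of_deriv {f f' : ℝ → ℝ} {a b : ℝ}
    (hf : ∀ s ∈ Icc a b, HasDerivWithinAt f (f' s) (Icc a b) s) :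
    ContinuousOn f (Icc a b) := fun s hs => (hf s hs).continuousWithinAt

lemma hasDerivWithinAt_Ici_of_Icc {f : ℝ → ℝ} {d a b x : ℝ} (hx : x ∈ Ico a b)
    (h : HasDerivWithinAt f d (Icc a b) x) : HasDerivWithinAt f d (Ici x) x :=
  h.mono_of_mem_nhdsWithin (Filter.mem_of_superset (Icc_mem_nhdsGE_of_mem ⟨le_rfl, hx.2⟩)
    (Icc_subset_Icc_left hx.1))

/-- Upper barrier lemma. -/
lemma barrier_le {f f' : ℝ → ℝ} {a b c : ℝ}
    (hf : ∀ τ ∈ Icc a b, HasDerivWithinAt f (f' τ) (Icc a b) τ)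
    (h0 : f a ≤ c) (hd : ∀ τ ∈ Icc a b, c ≤ f τ → f' τ ≤ 0) :
    ∀ τ ∈ Icc a b, f τ ≤ c := by
  intro τ1 hτ1
  by_contra hgt
  push_neg at hgt
  have hab : a ≤ b := hτ1.1.trans hτ1.2
  have hcont : ContinuousOn f (Icc a b) := contOn_of_deriv hf
  set S := Icc a τ1 ∩ f ⁻¹' (Iic c) with hS
  have hSclosed : IsClosed S := by
    have : ContinuousOn f (Icc a τ1) := hcont.mono (Icc_subset_Icc le_rfl hτ1.2)
    exact this.preimage_isClosed_of_isClosed isClosed_Icc isClosed_Iic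
  have hSne : S.Nonempty := ⟨a, ⟨le_rfl, hτ1.1⟩, h0⟩
  have hSbdd : BddAbove S := ⟨τ1, fun x hx => hx.1.2⟩
  set τ0 := sSup S with hτ0def
  have hτ0S : τ0 ∈ S := hSclosed.csSup_mem hSne hSbdd
  have hτ0a : a ≤ τ0 := hτ0S.1.1
  have hτ0τ1 : τ0 ≤ τ1 := hτ0S.1.2
  have hfτ0 : f τ0 ≤ c := hτ0S.2
  have hτ0lt : τ0 < τ1 := by
    rcases lt_or_eq_of_le hτ0τ1 with h | h
    · exact h
    · exact absurd (h ▸ hfτ0) (not_le_of_gt hgt)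
  -- on (τ0, τ1], f > c
  have hgtmid : ∀ u ∈ Ioc τ0 τ1, c < f u := by
    intro u hu
    by_contra hle
    push_neg at hle
    have : u ∈ S := ⟨⟨hτ0a.trans hu.1.le, hu.2⟩, hle⟩
    exact absurd (le_csSup hSbdd this) (not_le_of_gt hu.1)
  -- f is antitone on [τ0, τ1]
  have hsub : Icc τ0 τ1 ⊆ Icc a b := Icc_subset_Icc hτ0a (hτ1.2)
  have hint : interior (Icc τ0 τ1) ⊆ interior (Icc a b) := interior_mono hsub
  have hderiv : ∀ x ∈ interior (Icc τ0 τ1), HasDerivAt f (f' x) x := by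
    intro x hx
    have hx' : x ∈ interior (Icc a b) := hint hx
    have : Icc a b ∈ nhds x := mem_interior_iff_mem_nhds.1 hx'
    exact (hf x (interior_subset hx')).hasDerivAt this
  have hanti : AntitoneOn f (Icc τ0 τ1) := by
    apply antitoneOn_of_deriv_nonpos (convex_Icc _ _) (hcont.mono hsub)
    · intro x hx
      exact (hderiv x hx).differentiableAt.differentiableWithinAt
    · intro x hx
      rw [(hderiv x hx).deriv]
      have hx2 : x ∈ Ioo τ0 τ1 := by rwa [interior_Icc] at hx
      exact hd x (hsub (interior_subset hx)) (hgtmid x ⟨hx2.1, hx2.2.le⟩).le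
  have := hanti ⟨le_rfl, hτ0lt.le⟩ ⟨hτ0lt.le, le_rfl⟩ hτ0lt.le
  have : f τ1 ≤ c := this.trans hfτ0
  exact absurd this (not_le_of_gt hgt)

lemma barrier_ge {f f' : ℝ → ℝ} {a b c : ℝ}
    (hf : ∀ τ ∈ Icc a b, HasDerivWithinAt f (f' τ) (Icc a b) τ)
    (h0 : c ≤ f a) (hd : ∀ τ ∈ Icc a b, f τ ≤ c → 0 ≤ f' τ) :
    ∀ τ ∈ Icc a b, c ≤ f τ := by
  have key := barrier_le (f := fun τ => -f τ) (f' := fun τ => -f' τ) (c := -c)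
    (fun τ hτ => (hf τ hτ).neg) (by simpa using h0)
    (fun τ hτ h => by
      have h' : f τ ≤ c := by simpa using neg_le_neg h
      simpa using hd τ hτ h')
  intro τ hτ
  have := key τ hτ
  simpa using this

lemma gronwallBound_le_aux {K ε x : ℝ} (hK : 0 ≤ K) (hε : 0 ≤ ε) (hx : 0 ≤ x) :
    gronwallBound 0 K ε x ≤ ε * x * Real.exp (K * x) := by
  rcases eq_or_lt_of_le hK with h | hKpos
  · rw [← h, gronwallBound_K0]
    have : Real.exp (0 * x) = 1 := by norm_num
    rw [this]
    ring_nf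
    nlinarith
  · rw [gronwallBound_of_K_ne_0 (ne_of_gt hKpos)]
    have h1 : Real.exp (K * x) - 1 ≤ K * x * Real.exp (K * x) := by
      have h2 := Real.add_one_le_exp (-(K * x))
      have h3 : Real.exp (-(K * x)) = (Real.exp (K * x))⁻¹ := Real.exp_neg _
      have h4 : (0:ℝ) < Real.exp (K * x) := Real.exp_pos _
      rw [h3] at h2
      have h5 : (-(K*x) + 1) * Real.exp (K*x) ≤ (Real.exp (K*x))⁻¹ * Real.exp (K*x) :=
        mul_le_mul_of_nonneg_right h2 h4.le
      rw [inv_mul_cancel₀ (ne_of_gt h4)] at h5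
      nlinarith
    have h6 : ε / K * (Real.exp (K * x) - 1) ≤ ε / K * (K * x * Real.exp (K * x)) := by
      apply mul_le_mul_of_nonneg_left h1 (div_nonneg hε hKpos.le)
    calc 0 * Real.exp (K * x) + ε / K * (Real.exp (K * x) - 1)
        = ε / K * (Real.exp (K * x) - 1) := by ring
      _ ≤ ε / K * (K * x * Real.exp (K * x)) := h6
      _ = ε * x * Real.exp (K * x) := by field_simp

lemma backward_gronwall {f f' : ℝ → ℝ} {δ K ε : ℝ} {a b : ℝ} (hab : a ≤ b)
    (hf : ∀ s ∈ Icc a b, HasDerivWithinAt f (f' s) (Icc a b) s)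
    (hb : |f b| ≤ δ)
    (bound : ∀ s ∈ Icc a b, |f' s| ≤ K * |f s| + ε) :
    ∀ s ∈ Icc a b, |f s| ≤ gronwallBound δ K ε (b - s) := by
  have hmaps : MapsTo (fun τ : ℝ => a + b - τ) (Icc a b) (Icc a b) := by
    intro τ hτ
    simp only [mem_Icc] at hτ ⊢
    constructor <;> linarith [hτ.1, hτ.2]
  have hmem : ∀ τ ∈ Icc a b, a + b - τ ∈ Icc a b := fun τ hτ => hmaps hτ
  have hinner : ∀ τ : ℝ, HasDerivWithinAt (fun τ : ℝ => a + b - τ) (-1) (Icc a b) τ := by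
    intro τ
    simpa using ((hasDerivAt_id τ).const_sub (a + b)).hasDerivWithinAt
  set g : ℝ → ℝ := fun τ => f (a + b - τ) with hg
  set g' : ℝ → ℝ := fun τ => -(f' (a + b - τ)) with hg'
  have hgd : ∀ τ ∈ Icc a b, HasDerivWithinAt g (g' τ) (Icc a b) τ := by
    intro τ hτ
    have := HasDerivWithinAt.comp τ (hf _ (hmem τ hτ)) (hinner τ) hmaps
    simpa [hg, hg', mul_comm, Function.comp_def] using this
  have hgcont : ContinuousOn g (Icc a b) := fun τ hτ => (hgd τ hτ).continuousWithinAt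
  have hga : ‖g a‖ ≤ δ := by
    simp only [hg, Real.norm_eq_abs]
    have : a + b - a = b := by ring
    rw [this]; exact hb
  have hgderiv : ∀ x ∈ Ico a b, HasDerivWithinAt g (g' x) (Ici x) x := by
    intro x hx
    have h := hgd x ⟨hx.1, hx.2.le⟩
    exact h.mono_of_mem_nhdsWithin (Filter.mem_of_superset (Icc_mem_nhdsGE_of_mem ⟨le_rfl, hx.2⟩)
      (Icc_subset_Icc_left hx.1))
  have hbound : ∀ x ∈ Ico a b, ‖g' x‖ ≤ K * ‖g x‖ + ε := by
    intro x hx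
    simp only [hg, hg', Real.norm_eq_abs, abs_neg]
    exact bound _ (hmem x ⟨hx.1, hx.2.le⟩)
  have main := norm_le_gronwallBound_of_norm_deriv_right_le hgcont hgderiv hga hbound
  intro s hs
  have hs' : a + b - s ∈ Icc a b := hmem s hs
  have := main (a + b - s) hs'
  simp only [hg, Real.norm_eq_abs] at this
  have e1 : a + b - (a + b - s) = s := by ring
  have e2 : a + b - s - a = b - s := by ring
  rwa [e1, e2] at this

noncomputable def clampR (M x : ℝ) : ℝ := min (max x 0) M

lemma clampR_nonneg {M x : ℝ} (hM : 0 ≤ M) : 0 ≤ clampR M x := by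
  unfold clampR; exact le_min (le_max_right _ _) hM

lemma clampR_le {M x : ℝ} : clampR M x ≤ M := min_le_right _ _

lemma clampR_eq {M x : ℝ} (h0 : 0 ≤ x) (hM : x ≤ M) : clampR M x = x := by
  unfold clampR; rw [max_eq_left h0, min_eq_left hM]

lemma clampR_lip {M : ℝ} (x y : ℝ) : |clampR M x - clampR M y| ≤ |x - y| :=
  (abs_inf_sub_inf_le_abs _ _ _).trans (abs_sup_sub_sup_le_abs _ _ _)

/-- bounded Lipschitz functions on ℝ × ℝ (existential constants) -/
def LBx (f : ℝ × ℝ → ℝ) : Prop :=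
  ∃ K C : ℝ, 0 ≤ K ∧ 0 ≤ C ∧ (∀ x y, |f x - f y| ≤ K * dist x y) ∧ ∀ x, |f x| ≤ C

lemma LBx.const (c : ℝ) : LBx (fun _ => c) :=
  ⟨0, |c|, le_rfl, abs_nonneg c, fun x y => by simp, fun x => le_rfl⟩

lemma dist_fst_le' (x y : ℝ × ℝ) : dist x.1 y.1 ≤ dist x y := by
  rw [Prod.dist_eq]; exact le_max_left _ _

lemma dist_snd_le' (x y : ℝ × ℝ) : dist x.2 y.2 ≤ dist x y := by
  rw [Prod.dist_eq]; exact le_max_right _ _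

lemma LBx.clampFst {M : ℝ} (hM : 0 ≤ M) : LBx (fun x => clampR M x.1) := by
  refine ⟨1, M, zero_le_one, hM, fun x y => ?_, fun x => ?_⟩
  · calc |clampR M x.1 - clampR M y.1| ≤ |x.1 - y.1| := clampR_lip _ _
      _ = dist x.1 y.1 := (Real.dist_eq _ _).symm
      _ ≤ dist x y := dist_fst_le' x y
      _ = 1 * dist x y := (one_mul _).symm
  · rw [abs_of_nonneg (clampR_nonneg hM)]; exact clampR_le

lemma LBx.clampSnd {M : ℝ} (hM : 0 ≤ M) : LBx (fun x => clampR M x.2) := by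
  refine ⟨1, M, zero_le_one, hM, fun x y => ?_, fun x => ?_⟩
  · calc |clampR M x.2 - clampR M y.2| ≤ |x.2 - y.2| := clampR_lip _ _
      _ = dist x.2 y.2 := (Real.dist_eq _ _).symm
      _ ≤ dist x y := dist_snd_le' x y
      _ = 1 * dist x y := (one_mul _).symm
  · rw [abs_of_nonneg (clampR_nonneg hM)]; exact clampR_le

lemma LBx.add {f g : ℝ × ℝ → ℝ} (hf : LBx f) (hg : LBx g) : LBx (fun x => f x + g x) := by
  obtain ⟨K1, C1, hK1, hC1, hl1, hb1⟩ := hf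
  obtain ⟨K2, C2, hK2, hC2, hl2, hb2⟩ := hg
  refine ⟨K1 + K2, C1 + C2, by linarith, by linarith, fun x y => ?_, fun x => ?_⟩
  · calc |f x + g x - (f y + g y)| = |(f x - f y) + (g x - g y)| := by ring_nf
      _ ≤ |f x - f y| + |g x - g y| := abs_add_le _ _
      _ ≤ K1 * dist x y + K2 * dist x y := add_le_add (hl1 x y) (hl2 x y)
      _ = (K1 + K2) * dist x y := by ring
  · exact (abs_add_le _ _).trans (add_le_add (hb1 x) (hb2 x))

lemma LBx.mul {f g : ℝ × ℝ → ℝ} (hf : LBx f) (hg : LBx g) : LBx (fun x => f x * g x) := by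
  obtain ⟨K1, C1, hK1, hC1, hl1, hb1⟩ := hf
  obtain ⟨K2, C2, hK2, hC2, hl2, hb2⟩ := hg
  refine ⟨K1 * C2 + K2 * C1, C1 * C2, by positivity, by positivity, fun x y => ?_, fun x => ?_⟩
  · have hd : (0:ℝ) ≤ dist x y := dist_nonneg
    calc |f x * g x - f y * g y| = |(f x - f y) * g x + f y * (g x - g y)| := by ring_nf
      _ ≤ |(f x - f y) * g x| + |f y * (g x - g y)| := abs_add_le _ _
      _ = |f x - f y| * |g x| + |f y| * |g x - g y| := by rw [abs_mul, abs_mul]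
      _ ≤ (K1 * dist x y) * C2 + C1 * (K2 * dist x y) := by
          apply add_le_add
          · exact mul_le_mul (hl1 x y) (hb2 x) (abs_nonneg _) (by positivity)
          · exact mul_le_mul (hb1 y) (hl2 x y) (abs_nonneg _) hC1
      _ = (K1 * C2 + K2 * C1) * dist x y := by ring
  · rw [abs_mul]
    exact mul_le_mul (hb1 x) (hb2 x) (abs_nonneg _) hC1

lemma LBx.smul (c : ℝ) {f : ℝ × ℝ → ℝ} (hf : LBx f) : LBx (fun x => c * f x) :=
  (LBx.const c).mul hf

lemma LBx.neg {f : ℝ × ℝ → ℝ} (hf : LBx f) : LBx (fun x => -f x) := by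
  have := LBx.smul (-1) hf
  simpa using this

lemma LBx.sub {f g : ℝ × ℝ → ℝ} (hf : LBx f) (hg : LBx g) : LBx (fun x => f x - g x) := by
  have := hf.add hg.neg
  simpa [sub_eq_add_neg] using this





lemma clampR_eq_top {M x : ℝ} (h0 : 0 ≤ M) (hM : M ≤ x) : clampR M x = M := by
  unfold clampR; rw [max_eq_left (h0.trans hM), min_eq_right hM]

lemma clampR_eq_bot {M x : ℝ} (h0 : x ≤ 0) (hM : 0 ≤ M) : clampR M x = 0 := by
  unfold clampR; rw [max_eq_right h0, min_eq_left hM]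

noncomputable def fieldG (σ R ρ γ l M : ℝ) (x : ℝ × ℝ) : ℝ × ℝ :=
  ((σ^2 - ρ) * clampR M x.1 +
    ((-(2/R)) * ((l * clampR M x.1 + (1-l) * clampR M x.2) * clampR M x.1) +
     (1/R) * ((l * clampR M x.1 + (1-l) * clampR M x.2) *
       (l * clampR M x.1 + (1-l) * clampR M x.2))),
   (σ^2 - γ) * clampR M x.2 +
    ((-(2/R)) * ((l * clampR M x.1 + (1-l) * clampR M x.2) * clampR M x.2) +
     (1/R) * ((l * clampR M x.1 + (1-l) * clampR M x.2) *
       (l * clampR M x.1 + (1-l) * clampR M x.2))))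


lemma quad_ineq {σ R κ c M p : ℝ} (hR : 0 < R) (hκ : 0 < κ) (hM0 : 0 ≤ M)
    (hc0 : 0 < c) (hMc : R*σ^2 + c ≤ c*M) (hp1 : c*M ≤ p) (hp2 : p ≤ M) :
    (σ^2 - κ) * M + ((-(2/R)) * (p * M) + (1/R) * (p * p)) ≤ 0 := by
  have h0p : 0 ≤ p := le_trans (by positivity) hp1
  have k1 : c*M*M ≤ p*M := mul_le_mul_of_nonneg_right hp1 hM0
  have k2 : p*M ≤ p*(2*M - p) := mul_le_mul_of_nonneg_left (by linarith) h0p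
  have hkey : (c*M)*M ≤ p*(2*M - p) := le_trans k1 k2
  have e1 : R*σ^2*M ≤ (c*M - c)*M := mul_le_mul_of_nonneg_right (by linarith) hM0
  have e2 : R*((σ^2 - κ)*M) ≤ p*(2*M - p) := by
    nlinarith [mul_nonneg (mul_nonneg hR.le hκ.le) hM0, mul_nonneg hc0.le hM0]
  have h3 : (σ^2 - κ)*M ≤ (2*p*M - p*p)/R := by
    rw [le_div_iff₀ hR]; nlinarith
  have h4 : (-(2/R))*(p*M) + (1/R)*(p*p) = -((2*p*M - p*p)/R) := by
    field_simp; ring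
  linarith

lemma invariance (σ R ρ γ l M T : ℝ) (hR : 0 < R) (hl0 : 0 < l) (hl1 : l < 1)
    (hρ : 0 < ρ) (hγ : 0 < γ) (h1M : 1 ≤ M)
    (hMl : R*σ^2 + l ≤ l*M) (hMl' : R*σ^2 + (1-l) ≤ (1-l)*M)
    {v : ℝ → ℝ × ℝ} (hv0 : v 0 = (1,1))
    (hv : ∀ τ ∈ Icc (0:ℝ) T, HasDerivWithinAt v (fieldG σ R ρ γ l M (v τ)) (Icc (0:ℝ) T) τ) :
    ∀ τ ∈ Icc (0:ℝ) T, 0 ≤ (v τ).1 ∧ (v τ).1 ≤ M ∧ 0 ≤ (v τ).2 ∧ (v τ).2 ≤ M := by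
  have hM0 : (0:ℝ) ≤ M := zero_le_one.trans h1M
  have hvA : ∀ τ ∈ Icc (0:ℝ) T, HasDerivWithinAt (fun τ => (v τ).1)
      ((fieldG σ R ρ γ l M (v τ)).1) (Icc (0:ℝ) T) τ := fun τ hτ => (hv τ hτ).fst
  have hvB : ∀ τ ∈ Icc (0:ℝ) T, HasDerivWithinAt (fun τ => (v τ).2)
      ((fieldG σ R ρ γ l M (v τ)).2) (Icc (0:ℝ) T) τ := fun τ hτ => (hv τ hτ).snd
  have hA0 : (v 0).1 = 1 := by rw [hv0]
  have hB0 : (v 0).2 = 1 := by rw [hv0]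
  -- bounds on clamped quantities
  have hcb : ∀ x : ℝ × ℝ, 0 ≤ clampR M x.2 ∧ clampR M x.2 ≤ M ∧
      0 ≤ clampR M x.1 ∧ clampR M x.1 ≤ M :=
    fun x => ⟨clampR_nonneg hM0, clampR_le, clampR_nonneg hM0, clampR_le⟩
  -- A ≥ 0
  have hAge : ∀ τ ∈ Icc (0:ℝ) T, (0:ℝ) ≤ (v τ).1 := by
    apply barrier_ge hvA (by rw [hA0]; norm_num)
    intro τ hτ h
    have hcl : clampR M (v τ).1 = 0 := clampR_eq_bot h hM0
    simp only [fieldG, hcl]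
    have hexp : (σ^2 - ρ) * 0 +
        ((-(2/R)) * ((l * 0 + (1-l) * clampR M (v τ).2) * 0) +
         (1/R) * ((l * 0 + (1-l) * clampR M (v τ).2) *
           (l * 0 + (1-l) * clampR M (v τ).2)))
        = (1/R) * ((1-l) * clampR M (v τ).2)^2 := by ring
    rw [hexp]
    exact mul_nonneg (le_of_lt (one_div_pos.mpr hR)) (sq_nonneg _)
  -- B ≥ 0
  have hBge : ∀ τ ∈ Icc (0:ℝ) T, (0:ℝ) ≤ (v τ).2 := by
    apply barrier_ge hvB (by rw [hB0]; norm_num)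
    intro τ hτ h
    have hcl : clampR M (v τ).2 = 0 := clampR_eq_bot h hM0
    simp only [fieldG, hcl]
    have hexp : (σ^2 - γ) * 0 +
        ((-(2/R)) * ((l * clampR M (v τ).1 + (1-l) * 0) * 0) +
         (1/R) * ((l * clampR M (v τ).1 + (1-l) * 0) *
           (l * clampR M (v τ).1 + (1-l) * 0)))
        = (1/R) * (l * clampR M (v τ).1)^2 := by ring
    rw [hexp]
    exact mul_nonneg (le_of_lt (one_div_pos.mpr hR)) (sq_nonneg _)
  -- A ≤ M
  have hAle : ∀ τ ∈ Icc (0:ℝ) T, (v τ).1 ≤ M := by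
    apply barrier_le hvA (by rw [hA0]; exact h1M)
    intro τ hτ h
    have hcl : clampR M (v τ).1 = M := clampR_eq_top hM0 h
    simp only [fieldG, hcl]
    have h2 : 0 ≤ clampR M (v τ).2 := clampR_nonneg hM0
    have h3 : clampR M (v τ).2 ≤ M := clampR_le
    exact quad_ineq hR hρ hM0 hl0 hMl (by nlinarith) (by nlinarith)
  -- B ≤ M
  have hBle : ∀ τ ∈ Icc (0:ℝ) T, (v τ).2 ≤ M := by
    apply barrier_le hvB (by rw [hB0]; exact h1M)
    intro τ hτ h
    have hcl : clampR M (v τ).2 = M := clampR_eq_top hM0 h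
    simp only [fieldG, hcl]
    have h2 : 0 ≤ clampR M (v τ).1 := clampR_nonneg hM0
    have h3 : clampR M (v τ).1 ≤ M := clampR_le
    have := quad_ineq (σ := σ) (κ := γ) (c := 1-l) (M := M)
      (p := l * clampR M (v τ).1 + (1-l) * M) hR hγ hM0 (by linarith) hMl'
      (by nlinarith) (by nlinarith)
    linarith [this]
  exact fun τ hτ => ⟨hAge τ hτ, hAle τ hτ, hBge τ hτ, hBle τ hτ⟩





lemma fieldG_LB (σ R ρ γ l M : ℝ) (hM : 0 ≤ M) :
    ∃ K C : ℝ, 0 ≤ K ∧ 0 ≤ C ∧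
      (∀ x y, dist (fieldG σ R ρ γ l M x) (fieldG σ R ρ γ l M y) ≤ K * dist x y) ∧
      (∀ x, ‖fieldG σ R ρ γ l M x‖ ≤ C) := by
  have hA := LBx.clampFst hM
  have hB := LBx.clampSnd hM
  have hp : LBx (fun x => l * clampR M x.1 + (1-l) * clampR M x.2) :=
    (LBx.smul l hA).add (LBx.smul (1-l) hB)
  have h1 : LBx (fun x => (σ^2 - ρ) * clampR M x.1 +
      ((-(2/R)) * ((l * clampR M x.1 + (1-l) * clampR M x.2) * clampR M x.1) +
       (1/R) * ((l * clampR M x.1 + (1-l) * clampR M x.2) *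
         (l * clampR M x.1 + (1-l) * clampR M x.2)))) :=
    (LBx.smul (σ^2 - ρ) hA).add ((LBx.smul (-(2/R)) (hp.mul hA)).add
      (LBx.smul (1/R) (hp.mul hp)))
  have h2 : LBx (fun x => (σ^2 - γ) * clampR M x.2 +
      ((-(2/R)) * ((l * clampR M x.1 + (1-l) * clampR M x.2) * clampR M x.2) +
       (1/R) * ((l * clampR M x.1 + (1-l) * clampR M x.2) *
         (l * clampR M x.1 + (1-l) * clampR M x.2)))) :=
    (LBx.smul (σ^2 - γ) hB).add ((LBx.smul (-(2/R)) (hp.mul hB)).add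
      (LBx.smul (1/R) (hp.mul hp)))
  obtain ⟨K1, C1, hK1, hC1, hl1, hb1⟩ := h1
  obtain ⟨K2, C2, hK2, hC2, hl2, hb2⟩ := h2
  refine ⟨K1 + K2, C1 + C2, by linarith, by linarith, fun x y => ?_, fun x => ?_⟩
  · rw [Prod.dist_eq]
    have hd : (0:ℝ) ≤ dist x y := dist_nonneg
    apply max_le
    · calc dist (fieldG σ R ρ γ l M x).1 (fieldG σ R ρ γ l M y).1
          = |(fieldG σ R ρ γ l M x).1 - (fieldG σ R ρ γ l M y).1| := Real.dist_eq _ _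
        _ ≤ K1 * dist x y := hl1 x y
        _ ≤ (K1 + K2) * dist x y := by nlinarith
    · calc dist (fieldG σ R ρ γ l M x).2 (fieldG σ R ρ γ l M y).2
          = |(fieldG σ R ρ γ l M x).2 - (fieldG σ R ρ γ l M y).2| := Real.dist_eq _ _
        _ ≤ K2 * dist x y := hl2 x y
        _ ≤ (K1 + K2) * dist x y := by nlinarith
  · rw [Prod.norm_def]
    apply max_le
    · calc ‖(fieldG σ R ρ γ l M x).1‖ = |(fieldG σ R ρ γ l M x).1| := rfl
        _ ≤ C1 := hb1 x
        _ ≤ C1 + C2 := by linarith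
    · calc ‖(fieldG σ R ρ γ l M x).2‖ = |(fieldG σ R ρ γ l M x).2| := rfl
        _ ≤ C2 := hb2 x
        _ ≤ C1 + C2 := by linarith

lemma exists_sol (σ R ρ γ l M T : ℝ) (hM : 0 ≤ M) (hT : 0 ≤ T) :
    ∃ v : ℝ → ℝ × ℝ, v 0 = (1, 1) ∧
      ∀ τ ∈ Icc (0:ℝ) T, HasDerivWithinAt v (fieldG σ R ρ γ l M (v τ)) (Icc (0:ℝ) T) τ := by
  obtain ⟨K, C, hK, hC, hlip, hbd⟩ := fieldG_LB σ R ρ γ l M hM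
  have hpl : IsPicardLindelof (fun (_ : ℝ) x => fieldG σ R ρ γ l M x) (tmin := 0) (tmax := T)
      ⟨0, ⟨le_rfl, hT⟩⟩ (1,1) (C*T+1).toNNReal 0 C.toNNReal K.toNNReal := by
    constructor
    · intro t ht
      apply LipschitzWith.lipschitzOnWith
      apply LipschitzWith.of_dist_le_mul
      intro x y
      rw [Real.coe_toNNReal K hK]
      exact hlip x y
    · intro x hx; exact continuousOn_const
    · intro t ht x hx; rw [Real.coe_toNNReal C hC]; exact hbd x
    · have : max T 0 = T := max_eq_left hT
      simp only [NNReal.coe_zero, sub_zero, Real.coe_toNNReal C hC,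
        Real.coe_toNNReal _ (by positivity : (0:ℝ) ≤ C*T+1)]
      rw [this]; linarith
  obtain ⟨f, hf0, hf⟩ := hpl.exists_eq_forall_mem_Icc_hasDerivWithinAt₀
  exact ⟨f, hf0, fun τ hτ => hf τ hτ⟩

lemma abs_riccati_bound {σ R a Qv Pv qv pv Mq Mp : ℝ} (hR : 0 < R)
    (ha : |a| ≤ 1) (hq : |qv| ≤ Mq) (hP : |Pv| ≤ Mp) (hp : |pv| ≤ Mp) :
    |(-σ^2*Qv + (2/R)*Qv*qv - a*(qv)^2/R) - (-σ^2*Pv + (2/R)*Pv*pv - a*(pv)^2/R)|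
      ≤ (σ^2 + 2*Mq/R) * |Qv - Pv| + ((3*Mp + Mq)/R) * |qv - pv| := by
  have hMq0 : 0 ≤ Mq := (abs_nonneg _).trans hq
  have hMp0 : 0 ≤ Mp := (abs_nonneg _).trans hP
  have h1 : (-σ^2*Qv + (2/R)*Qv*qv - a*(qv)^2/R) - (-σ^2*Pv + (2/R)*Pv*pv - a*(pv)^2/R)
      = -(σ^2*(Qv-Pv)) + ((2/R)*((Qv-Pv)*qv + Pv*(qv-pv)) + -((a/R)*((qv+pv)*(qv-pv)))) := by
    field_simp; ring
  rw [h1]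
  have tri : ∀ x y z : ℝ, |x + (y + z)| ≤ |x| + |y| + |z| := by
    intro x y z
    calc |x + (y + z)| ≤ |x| + |y + z| := abs_add_le _ _
      _ ≤ |x| + (|y| + |z|) := by linarith [abs_add_le y z]
      _ = |x| + |y| + |z| := by ring
  apply le_trans (tri _ _ _)
  have t1 : |-(σ^2*(Qv-Pv))| = σ^2 * |Qv-Pv| := by
    rw [abs_neg, abs_mul, abs_of_nonneg (sq_nonneg σ)]
  have t2 : |(2/R)*((Qv-Pv)*qv + Pv*(qv-pv))| ≤ (2/R)*(|Qv-Pv| *Mq + Mp* |qv-pv|) := by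
    rw [abs_mul, abs_of_nonneg (by positivity : (0:ℝ) ≤ 2/R)]
    apply mul_le_mul_of_nonneg_left _ (by positivity : (0:ℝ) ≤ 2/R)
    calc |(Qv-Pv)*qv + Pv*(qv-pv)| ≤ |(Qv-Pv)*qv| + |Pv*(qv-pv)| := abs_add_le _ _
      _ = |Qv-Pv| * |qv| + |Pv| * |qv-pv| := by rw [abs_mul, abs_mul]
      _ ≤ |Qv-Pv| *Mq + Mp* |qv-pv| := add_le_add
          (mul_le_mul_of_nonneg_left hq (abs_nonneg _))
          (mul_le_mul_of_nonneg_right hP (abs_nonneg _))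
  have t3 : |-((a/R)*((qv+pv)*(qv-pv)))| ≤ (1/R)*((Mq+Mp)* |qv-pv|) := by
    rw [abs_neg, abs_mul, abs_mul]
    have ha2 : |a/R| ≤ 1/R := by
      rw [abs_div, abs_of_pos hR]
      exact div_le_div_of_nonneg_right ha hR.le
    have hsum : |qv+pv| ≤ Mq + Mp := (abs_add_le _ _).trans (add_le_add hq hp)
    have hinner : |qv+pv| * |qv-pv| ≤ (Mq+Mp) * |qv-pv| :=
      mul_le_mul_of_nonneg_right hsum (abs_nonneg _)
    have h0 : (0:ℝ) ≤ |qv+pv| * |qv-pv| := mul_nonneg (abs_nonneg _) (abs_nonneg _)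
    calc |a/R| * (|qv+pv| * |qv-pv|) ≤ (1/R) * (|qv+pv| * |qv-pv|) :=
          mul_le_mul_of_nonneg_right ha2 h0
      _ ≤ (1/R) * ((Mq+Mp)* |qv-pv|) := mul_le_mul_of_nonneg_left hinner (by positivity)
  have hfin : σ^2 * |Qv-Pv| + (2/R)*(|Qv-Pv| *Mq + Mp* |qv-pv|) + (1/R)*((Mq+Mp)* |qv-pv|)
      = (σ^2 + 2*Mq/R) * |Qv - Pv| + ((3*Mp + Mq)/R) * |qv - pv| := by
    field_simp; ring
  linarith [t1, t2, t3]

set_option maxHeartbeats 1600000 in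
/-- existence and uniqueness for the nonlocal Riccati equation of
the single-player time-inconsistent linear-quadratic problem with non-constant
discounting. -/
theorem single_player_nonlocal_riccati_existence_uniqueness
    (T σ R ρ γ l : ℝ) (hT : 0 < T) (hR : 0 < R)
    (hρ : 0 < ρ) (hργ : ρ < γ) (hl0 : 0 < l) (hl1 : l < 1)
    (α : ℝ → ℝ)
    (hα : α = fun t : ℝ => l * Real.exp (-ρ * t) + (1 - l) * Real.exp (-γ * t)) :
    ∃ P Ps : ℝ → ℝ → ℝ, IsSinglePlayerRiccatiSolution T σ R α P Ps ∧
      ∀ Q Qs : ℝ → ℝ → ℝ, IsSinglePlayerRiccatiSolution T σ R α Q Qs →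
        ∀ t ∈ Set.Icc (0 : ℝ) T, ∀ s ∈ Set.Icc t T, Q t s = P t s := by
  have hγ : 0 < γ := hρ.trans hργ
  have hl1' : 0 < 1 - l := by linarith
  -- the clamping bound M
  obtain ⟨M, hMdef⟩ : ∃ x : ℝ, x = max 1 (max (R*σ^2/l) (R*σ^2/(1-l))) + 1 := ⟨_, rfl⟩
  have h1M : 1 ≤ M := by
    have h := le_max_left 1 (max (R*σ^2/l) (R*σ^2/(1-l)))
    simp only [hMdef]; linarith
  have hM0 : (0:ℝ) ≤ M := by linarith
  have hMl : R*σ^2 + l ≤ l*M := by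
    have h1 : R*σ^2/l ≤ M - 1 := by
      have h := (le_max_left (R*σ^2/l) (R*σ^2/(1-l))).trans
        (le_max_right 1 (max (R*σ^2/l) (R*σ^2/(1-l))))
      simp only [hMdef]; linarith
    have h2 := (div_le_iff₀ hl0).mp h1
    nlinarith
  have hMl' : R*σ^2 + (1-l) ≤ (1-l)*M := by
    have h1 : R*σ^2/(1-l) ≤ M - 1 := by
      have h := (le_max_right (R*σ^2/l) (R*σ^2/(1-l))).trans
        (le_max_right 1 (max (R*σ^2/l) (R*σ^2/(1-l))))
      simp only [hMdef]; linarith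
    have h2 := (div_le_iff₀ hl1').mp h1
    nlinarith
  -- existence of the (clamped) backward characteristic system
  obtain ⟨v, hv0, hv⟩ := exists_sol σ R ρ γ l M T hM0 hT.le
  have hinv := invariance σ R ρ γ l M T hR hl0 hl1 hρ hγ h1M hMl hMl' hv0 hv
  have hvc : ContinuousOn v (Icc (0:ℝ) T) := fun τ hτ => (hv τ hτ).continuousWithinAt
  -- candidate solution
  obtain ⟨P, hPdef⟩ : ∃ x : ℝ → ℝ → ℝ, x = fun t s =>
    l * (Real.exp (-ρ * (s - t)) * (v (T - s)).1)
      + (1 - l) * (Real.exp (-γ * (s - t)) * (v (T - s)).2) := ⟨_, rfl⟩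
  obtain ⟨Ps, hPsdef⟩ : ∃ x : ℝ → ℝ → ℝ, x = fun t s =>
    (2 / R) * P t s * P s s - σ^2 * P t s - α (s - t) * (P s s)^2 / R := ⟨_, rfl⟩
  -- bounds for P
  have hPb : ∀ t s : ℝ, 0 ≤ t → t ≤ s → s ≤ T → 0 ≤ P t s ∧ P t s ≤ M := by
    intro t s h0t hts hsT
    have hTs : T - s ∈ Icc (0:ℝ) T := ⟨by linarith, by linarith⟩
    obtain ⟨hA0, hAM, hB0, hBM⟩ := hinv (T - s) hTs
    have he1 : Real.exp (-ρ * (s - t)) ≤ 1 := exp_le_one_iff.mpr (by nlinarith)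
    have he2 : Real.exp (-γ * (s - t)) ≤ 1 := exp_le_one_iff.mpr (by nlinarith)
    have hp1 : (0:ℝ) < Real.exp (-ρ * (s - t)) := Real.exp_pos _
    have hp2 : (0:ℝ) < Real.exp (-γ * (s - t)) := Real.exp_pos _
    constructor
    · have t1 := mul_nonneg hl0.le (mul_nonneg hp1.le hA0)
      have t2 := mul_nonneg hl1'.le (mul_nonneg hp2.le hB0)
      simp only [hPdef]; linarith
    · have u1 : Real.exp (-ρ*(s-t)) * (v (T-s)).1 ≤ M := by nlinarith
      have u2 : Real.exp (-γ*(s-t)) * (v (T-s)).2 ≤ M := by nlinarith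
      have u1' := mul_le_mul_of_nonneg_left u1 hl0.le
      have u2' := mul_le_mul_of_nonneg_left u2 hl1'.le
      simp only [hPdef]; nlinarith
  -- terminal condition
  have hPterm : ∀ t ∈ Icc (0:ℝ) T, P t T = α (T - t) := by
    intro t ht
    simp only [hPdef, hα]
    rw [sub_self, hv0]
    norm_num
  -- derivative clause
  have hPd : ∀ t ∈ Icc (0:ℝ) T, ∀ s ∈ Icc t T,
      HasDerivWithinAt (P t) (Ps t s) (Icc t T) s := by
    intro t ht s hs
    have h0t : 0 ≤ t := ht.1
    have hsT : s ∈ Icc (0:ℝ) T := ⟨h0t.trans hs.1, hs.2⟩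
    have hTs : T - s ∈ Icc (0:ℝ) T := ⟨by linarith [hsT.2], by linarith [hsT.1]⟩
    have hmaps : MapsTo (fun u : ℝ => T - u) (Icc t T) (Icc (0:ℝ) T) := by
      intro u hu
      show T - u ∈ Icc (0:ℝ) T
      exact ⟨by linarith [hu.2], by linarith [hu.1]⟩
    have hinner : HasDerivWithinAt (fun u : ℝ => T - u) (-1) (Icc t T) s := by
      simpa using ((hasDerivAt_id s).const_sub T).hasDerivWithinAt
    have hAd : HasDerivWithinAt (fun u : ℝ => (v (T - u)).1)
        ((fieldG σ R ρ γ l M (v (T - s))).1 * (-1)) (Icc t T) s :=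
      HasDerivWithinAt.comp s ((hv (T - s) hTs).fst) hinner hmaps
    have hBd : HasDerivWithinAt (fun u : ℝ => (v (T - u)).2)
        ((fieldG σ R ρ γ l M (v (T - s))).2 * (-1)) (Icc t T) s :=
      HasDerivWithinAt.comp s ((hv (T - s) hTs).snd) hinner hmaps
    have hedA : HasDerivAt (fun u : ℝ => Real.exp (-ρ * (u - t)))
        (Real.exp (-ρ * (s - t)) * (-ρ)) s := by
      have hin : HasDerivAt (fun u : ℝ => -ρ * (u - t)) (-ρ) s := by
        simpa using ((hasDerivAt_id s).sub_const t).const_mul (-ρ)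
      exact (Real.hasDerivAt_exp _).comp s hin
    have hedB : HasDerivAt (fun u : ℝ => Real.exp (-γ * (u - t)))
        (Real.exp (-γ * (s - t)) * (-γ)) s := by
      have hin : HasDerivAt (fun u : ℝ => -γ * (u - t)) (-γ) s := by
        simpa using ((hasDerivAt_id s).sub_const t).const_mul (-γ)
      exact (Real.hasDerivAt_exp _).comp s hin
    have h1 : HasDerivWithinAt (fun u => Real.exp (-ρ * (u - t)) * (v (T - u)).1)
        (Real.exp (-ρ * (s - t)) * (-ρ) * (v (T - s)).1 +
          Real.exp (-ρ * (s - t)) * ((fieldG σ R ρ γ l M (v (T - s))).1 * (-1)))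
        (Icc t T) s := hedA.hasDerivWithinAt.mul hAd
    have h2 : HasDerivWithinAt (fun u => Real.exp (-γ * (u - t)) * (v (T - u)).2)
        (Real.exp (-γ * (s - t)) * (-γ) * (v (T - s)).2 +
          Real.exp (-γ * (s - t)) * ((fieldG σ R ρ γ l M (v (T - s))).2 * (-1)))
        (Icc t T) s := hedB.hasDerivWithinAt.mul hBd
    have hsum := (h1.const_mul l).add (h2.const_mul (1 - l))
    have hGA : (fieldG σ R ρ γ l M (v (T - s))).1
        = (σ^2 - ρ) * (v (T-s)).1 +
          ((-(2/R)) * ((l * (v (T-s)).1 + (1-l) * (v (T-s)).2) * (v (T-s)).1) +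
           (1/R) * ((l * (v (T-s)).1 + (1-l) * (v (T-s)).2) *
             (l * (v (T-s)).1 + (1-l) * (v (T-s)).2))) := by
      obtain ⟨hA0, hAM, hB0, hBM⟩ := hinv (T - s) hTs
      simp only [fieldG]
      rw [clampR_eq hA0 hAM, clampR_eq hB0 hBM]
    have hGB : (fieldG σ R ρ γ l M (v (T - s))).2
        = (σ^2 - γ) * (v (T-s)).2 +
          ((-(2/R)) * ((l * (v (T-s)).1 + (1-l) * (v (T-s)).2) * (v (T-s)).2) +
           (1/R) * ((l * (v (T-s)).1 + (1-l) * (v (T-s)).2) *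
             (l * (v (T-s)).1 + (1-l) * (v (T-s)).2))) := by
      obtain ⟨hA0, hAM, hB0, hBM⟩ := hinv (T - s) hTs
      simp only [fieldG]
      rw [clampR_eq hA0 hAM, clampR_eq hB0 hBM]
    have hfun : P t = fun u => l * (Real.exp (-ρ * (u - t)) * (v (T - u)).1)
        + (1 - l) * (Real.exp (-γ * (u - t)) * (v (T - u)).2) := by
      funext u; simp only [hPdef]
    have heq : Ps t s = l * (Real.exp (-ρ * (s - t)) * (-ρ) * (v (T - s)).1 +
          Real.exp (-ρ * (s - t)) * ((fieldG σ R ρ γ l M (v (T - s))).1 * (-1))) +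
        (1 - l) * (Real.exp (-γ * (s - t)) * (-γ) * (v (T - s)).2 +
          Real.exp (-γ * (s - t)) * ((fieldG σ R ρ γ l M (v (T - s))).2 * (-1))) := by
      rw [hGA, hGB]
      simp only [hPsdef, hPdef, hα]
      rw [sub_self]
      simp only [mul_zero, Real.exp_zero, one_mul]
      field_simp
      ring
    rw [hfun, heq]
    exact hsum
  -- continuity clause
  have hPcont : ContinuousOn (fun p : ℝ × ℝ => P p.1 p.2)
      {p : ℝ × ℝ | 0 ≤ p.1 ∧ p.1 ≤ p.2 ∧ p.2 ≤ T} := by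
    have hmapv : MapsTo (fun p : ℝ × ℝ => T - p.2)
        {p : ℝ × ℝ | 0 ≤ p.1 ∧ p.1 ≤ p.2 ∧ p.2 ≤ T} (Icc (0:ℝ) T) := by
      intro p hp
      show T - p.2 ∈ Icc (0:ℝ) T
      exact ⟨by linarith [hp.2.2], by linarith [hp.1, hp.2.1]⟩
    have hvcomp : ContinuousOn (fun p : ℝ × ℝ => v (T - p.2))
        {p : ℝ × ℝ | 0 ≤ p.1 ∧ p.1 ≤ p.2 ∧ p.2 ≤ T} :=
      hvc.comp ((continuous_const.sub continuous_snd).continuousOn) hmapv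
    have hexpA : Continuous (fun p : ℝ × ℝ => Real.exp (-ρ * (p.2 - p.1))) :=
      Real.continuous_exp.comp (continuous_const.mul (continuous_snd.sub continuous_fst))
    have hexpB : Continuous (fun p : ℝ × ℝ => Real.exp (-γ * (p.2 - p.1))) :=
      Real.continuous_exp.comp (continuous_const.mul (continuous_snd.sub continuous_fst))
    simp only [hPdef]
    exact (continuousOn_const.mul (hexpA.continuousOn.mul hvcomp.fst)).add
      (continuousOn_const.mul (hexpB.continuousOn.mul hvcomp.snd))
  have hsol : IsSinglePlayerRiccatiSolution T σ R α P Ps :=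
    ⟨hPcont, fun t ht s hs => ⟨hPd t ht s hs, by simp only [hPsdef]; ring⟩, hPterm⟩
  refine ⟨P, Ps, hsol, ?_⟩
  -- ================= uniqueness =================
  rintro Q Qs ⟨hQc, hQode, hQterm⟩
  -- diagonal functions continuity and bounds
  have hdiagmem : ∀ s : ℝ, s ∈ Icc (0:ℝ) T →
      ((s, s) : ℝ × ℝ) ∈ {p : ℝ × ℝ | 0 ≤ p.1 ∧ p.1 ≤ p.2 ∧ p.2 ≤ T} :=
    fun s hs => ⟨hs.1, le_rfl, hs.2⟩
  have hqc : ContinuousOn (fun s : ℝ => Q s s) (Icc (0:ℝ) T) :=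
    hQc.comp ((continuous_id.prodMk continuous_id).continuousOn) hdiagmem
  have hpc : ContinuousOn (fun s : ℝ => P s s) (Icc (0:ℝ) T) :=
    hPcont.comp ((continuous_id.prodMk continuous_id).continuousOn) hdiagmem
  obtain ⟨Mq0, hMq0⟩ := isCompact_Icc.exists_bound_of_continuousOn hqc
  obtain ⟨Mq, hMqdef⟩ : ∃ x : ℝ, x = max Mq0 0 := ⟨_, rfl⟩
  have hMq : ∀ s ∈ Icc (0:ℝ) T, |Q s s| ≤ Mq := by
    intro s hs
    have := hMq0 s hs
    rw [Real.norm_eq_abs] at this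
    rw [hMqdef]
    exact this.trans (le_max_left _ _)
  have hMqnn : 0 ≤ Mq := by rw [hMqdef]; exact le_max_right _ _
  obtain ⟨K1, hK1def⟩ : ∃ x : ℝ, x = σ^2 + 2*Mq/R := ⟨_, rfl⟩
  obtain ⟨K2, hK2def⟩ : ∃ x : ℝ, x = (3*M + Mq)/R := ⟨_, rfl⟩
  have hK10 : 0 ≤ K1 := by
    have := sq_nonneg σ
    have : 0 ≤ 2*Mq/R := by positivity
    simp only [hK1def]; nlinarith [sq_nonneg σ]
  have hK20 : 0 ≤ K2 := by
    simp only [hK2def]; positivity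
  have hden : 0 < 2*(K2+1)*Real.exp (K1*T) := by
    have := Real.exp_pos (K1*T)
    nlinarith
  obtain ⟨h, hhdef⟩ : ∃ x : ℝ, x = 1/(2*(K2+1)*Real.exp (K1*T)) := ⟨_, rfl⟩
  have hh0 : 0 < h := by
    simp only [hhdef]
    exact one_div_pos.mpr hden
  -- α bound
  have hαb : ∀ x : ℝ, 0 ≤ x → |α x| ≤ 1 := by
    intro x hx
    simp only [hα]
    have e1 : Real.exp (-ρ * x) ≤ 1 := exp_le_one_iff.mpr (by nlinarith)
    have e2 : Real.exp (-γ * x) ≤ 1 := exp_le_one_iff.mpr (by nlinarith)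
    have p1 := Real.exp_pos (-ρ * x)
    have p2 := Real.exp_pos (-γ * x)
    rw [abs_of_nonneg (by nlinarith)]
    nlinarith
  -- the central derivative-difference bound
  have hgb : ∀ t ∈ Icc (0:ℝ) T, ∀ s ∈ Icc t T,
      |Qs t s - Ps t s| ≤ K1 * |Q t s - P t s| + K2 * |Q s s - P s s| := by
    intro t ht s hs
    have hsT : s ∈ Icc (0:ℝ) T := ⟨ht.1.trans hs.1, hs.2⟩
    have hQeq := (hQode t ht s hs).2
    have hPeq : Ps t s + σ ^ 2 * P t s - (2 / R) * P t s * P s s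
        + α (s - t) * (P s s) ^ 2 / R = 0 := by
      simp only [hPsdef]; ring
    have hQs : Qs t s = -σ^2*Q t s + (2/R)*Q t s*(Q s s) - α (s-t)*(Q s s)^2/R := by
      linarith
    have hPs' : Ps t s = -σ^2*P t s + (2/R)*P t s*(P s s) - α (s-t)*(P s s)^2/R := by
      linarith
    rw [hQs, hPs', hK1def, hK2def]
    have hP1 := hPb t s ht.1 hs.1 hs.2
    have hP2 := hPb s s hsT.1 le_rfl hsT.2
    exact abs_riccati_bound hR (hαb (s-t) (by linarith [hs.1]))
      (hMq s hsT)
      (by rw [abs_of_nonneg hP1.1]; exact hP1.2)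
      (by rw [abs_of_nonneg hP2.1]; exact hP2.2)
  -- off-diagonal propagation (Gronwall with ε = 0)
  have haST : ∀ t ∈ Icc (0:ℝ) T, ∀ t₀ ∈ Icc t T, (∀ u ∈ Icc t₀ T, Q u u = P u u) →
      ∀ s ∈ Icc t₀ T, Q t s = P t s := by
    intro t ht t₀ ht₀ hqe
    have hgder : ∀ s ∈ Icc t₀ T, HasDerivWithinAt (fun u => Q t u - P t u)
        (Qs t s - Ps t s) (Icc t₀ T) s := by
      intro s hs
      have hs' : s ∈ Icc t T := ⟨ht₀.1.trans hs.1, hs.2⟩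
      exact (((hQode t ht s hs').1).sub (hPd t ht s hs')).mono (Icc_subset_Icc_left ht₀.1)
    have hterm : |Q t T - P t T| ≤ 0 := by
      rw [hQterm t ht, hPterm t ht]; simp
    have hbound : ∀ s ∈ Icc t₀ T, |Qs t s - Ps t s| ≤ K1 * |Q t s - P t s| + 0 := by
      intro s hs
      have hs' : s ∈ Icc t T := ⟨ht₀.1.trans hs.1, hs.2⟩
      have hthis := hgb t ht s hs'
      rw [hqe s hs] at hthis
      simpa using hthis
    have hmain := backward_gronwall (δ := 0) (K := K1) (ε := 0) ht₀.2 hgder hterm hbound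
    intro s hs
    have h0 : |Q t s - P t s| ≤ 0 := by
      have := hmain s hs
      rwa [gronwallBound_ε0, zero_mul] at this
    exact sub_eq_zero.mp (abs_eq_zero.mp (le_antisymm h0 (abs_nonneg _)))
  -- stepping lemma for the diagonal
  have hstep : ∀ t₀ ∈ Icc (0:ℝ) T, (∀ u ∈ Icc t₀ T, Q u u = P u u) →
      ∀ t₁ ∈ Icc (0:ℝ) t₀, t₀ - t₁ ≤ h → ∀ u ∈ Icc t₁ T, Q u u = P u u := by
    intro t₀ ht₀ hqe t₁ ht₁ hdiff
    have ht₁0 : 0 ≤ t₁ := ht₁.1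
    have ht₁t₀ : t₁ ≤ t₀ := ht₁.2
    have hδc : ContinuousOn (fun u => |Q u u - P u u|) (Icc t₁ t₀) := by
      apply ContinuousOn.abs
      exact (hqc.mono (Icc_subset_Icc ht₁0 ht₀.2)).sub (hpc.mono (Icc_subset_Icc ht₁0 ht₀.2))
    obtain ⟨u0, hu0m, hu0max⟩ :=
      isCompact_Icc.exists_isMaxOn (nonempty_Icc.mpr ht₁t₀) hδc
    have hmax : ∀ u ∈ Icc t₁ t₀, |Q u u - P u u| ≤ |Q u0 u0 - P u0 u0| :=
      fun u hu => hu0max hu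
    obtain ⟨Δ, hΔdef⟩ : ∃ x : ℝ, x = |Q u0 u0 - P u0 u0| := ⟨_, rfl⟩
    have hΔnn : 0 ≤ Δ := by rw [hΔdef]; exact abs_nonneg _
    have hkey : ∀ t ∈ Icc t₁ t₀, |Q t t - P t t| ≤ Δ/2 := by
      intro t htm
      have htT : t ∈ Icc (0:ℝ) T := ⟨ht₁0.trans htm.1, htm.2.trans ht₀.2⟩
      have hgt₀ : Q t t₀ = P t t₀ :=
        haST t htT t₀ ⟨htm.2, ht₀.2⟩ hqe t₀ ⟨le_rfl, ht₀.2⟩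
      have hgder : ∀ s ∈ Icc t t₀, HasDerivWithinAt (fun u => Q t u - P t u)
          (Qs t s - Ps t s) (Icc t t₀) s := by
        intro s hs
        have hs' : s ∈ Icc t T := ⟨hs.1, hs.2.trans ht₀.2⟩
        exact (((hQode t htT s hs').1).sub (hPd t htT s hs')).mono
          (Icc_subset_Icc_right ht₀.2)
      have hterm : |Q t t₀ - P t t₀| ≤ 0 := by rw [hgt₀]; simp
      have hbound : ∀ s ∈ Icc t t₀, |Qs t s - Ps t s| ≤ K1 * |Q t s - P t s| + K2*Δ := by
        intro s hs
        have hs' : s ∈ Icc t T := ⟨hs.1, hs.2.trans ht₀.2⟩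
        have h1 := hgb t htT s hs'
        have h2 : |Q s s - P s s| ≤ Δ := by
          rw [hΔdef]; exact hmax s ⟨htm.1.trans hs.1, hs.2⟩
        have h3 := mul_le_mul_of_nonneg_left h2 hK20
        linarith
      have hmain := backward_gronwall (δ := 0) (K := K1) (ε := K2*Δ) htm.2 hgder hterm hbound
      have h3 := hmain t ⟨le_rfl, htm.2⟩
      have hKΔnn : 0 ≤ K2*Δ := mul_nonneg hK20 hΔnn
      have h4 : gronwallBound 0 K1 (K2*Δ) (t₀ - t) ≤ (K2*Δ) * (t₀-t) * Real.exp (K1*(t₀-t)) :=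
        gronwallBound_le_aux hK10 hKΔnn (by linarith [htm.2])
      have e1 : Real.exp (K1*(t₀-t)) ≤ Real.exp (K1*T) := by
        apply Real.exp_le_exp.mpr
        have ht₀T : t₀ - t ≤ T := by
          have := ht₀.2; have := htT.1; linarith
        nlinarith
      have e3 : 0 ≤ t₀ - t := by linarith [htm.2]
      have e4 : t₀ - t ≤ h := by linarith [htm.1]
      have h5 : (K2*Δ)*(t₀-t)*Real.exp (K1*(t₀-t)) ≤ (K2*Δ)*h*Real.exp (K1*T) := by
        have s1 : (K2*Δ)*(t₀-t)*Real.exp (K1*(t₀-t)) ≤ (K2*Δ)*(t₀-t)*Real.exp (K1*T) :=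
          mul_le_mul_of_nonneg_left e1 (mul_nonneg hKΔnn e3)
        have s2 : (K2*Δ)*(t₀-t)*Real.exp (K1*T) ≤ (K2*Δ)*h*Real.exp (K1*T) :=
          mul_le_mul_of_nonneg_right (mul_le_mul_of_nonneg_left e4 hKΔnn)
            (Real.exp_pos _).le
        linarith
      have h6 : (K2*Δ)*h*Real.exp (K1*T) ≤ Δ/2 := by
        have hE := Real.exp_pos (K1*T)
        have hcomp : (K2*Δ)*h*Real.exp (K1*T) = K2*Δ/(2*(K2+1)) := by
          simp only [hhdef]
          field_simp
        rw [hcomp, div_le_div_iff₀ (by nlinarith) (by norm_num)]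
        nlinarith
      linarith
    have hΔhalf := hkey u0 hu0m
    have hΔ0 : Δ = 0 := by
      rw [← hΔdef] at hΔhalf
      linarith
    intro u hu
    rcases le_total u t₀ with hc | hc
    · have h1 := hkey u ⟨hu.1, hc⟩
      have h0 := abs_nonneg (Q u u - P u u)
      have : |Q u u - P u u| = 0 := le_antisymm (by linarith) h0
      exact sub_eq_zero.mp (abs_eq_zero.mp this)
    · exact hqe u ⟨hc, hu.2⟩
  -- base case and iteration
  have hbase : Q T T = P T T := by
    rw [hQterm T ⟨hT.le, le_rfl⟩, hPterm T ⟨hT.le, le_rfl⟩]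
  have hiter : ∀ n : ℕ, ∀ u ∈ Icc (max 0 (T - n*h)) T, Q u u = P u u := by
    intro n
    induction n with
    | zero =>
      intro u hu
      simp only [Nat.cast_zero, zero_mul, sub_zero] at hu
      rw [max_eq_right hT.le] at hu
      have : u = T := le_antisymm hu.2 hu.1
      rw [this]; exact hbase
    | succ n ih =>
      have hnh : (0:ℝ) ≤ (n:ℝ)*h := mul_nonneg (Nat.cast_nonneg n) hh0.le
      have hmem : max 0 (T - (n:ℝ)*h) ∈ Icc (0:ℝ) T :=
        ⟨le_max_left _ _, max_le hT.le (by linarith)⟩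
      have hcast : ((n+1 : ℕ) : ℝ) = (n:ℝ) + 1 := by push_cast; ring
      have hc1 : max 0 (T - ((n+1:ℕ):ℝ)*h) ∈ Icc (0:ℝ) (max 0 (T - (n:ℝ)*h)) := by
        constructor
        · exact le_max_left _ _
        · apply max_le (le_max_left _ _)
          apply le_max_of_le_right
          rw [hcast]; nlinarith
      have hc2 : max 0 (T - (n:ℝ)*h) - max 0 (T - ((n+1:ℕ):ℝ)*h) ≤ h := by
        rw [hcast]
        rcases le_total (T - ((n:ℝ)+1)*h) 0 with hc | hc
        · rw [max_eq_left hc]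
          rw [sub_zero]
          apply max_le hh0.le
          nlinarith
        · rw [max_eq_right hc, max_eq_right (by nlinarith : (0:ℝ) ≤ T - (n:ℝ)*h)]
          ring_nf
          nlinarith
      exact hstep (max 0 (T - (n:ℝ)*h)) hmem ih (max 0 (T - ((n+1:ℕ):ℝ)*h)) hc1 hc2
  obtain ⟨n, hn⟩ := exists_nat_gt (T / h)
  have hTn : T - (n:ℝ)*h ≤ 0 := by
    have := (div_lt_iff₀ hh0).mp hn
    linarith
  have hall : ∀ u ∈ Icc (0:ℝ) T, Q u u = P u u := by
    have := hiter n
    rwa [max_eq_left hTn] at this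
  intro t ht s hs
  exact haST t ht t ⟨le_rfl, ht.2⟩ (fun u hu => hall u ⟨ht.1.trans hu.1, hu.2⟩) s hs
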